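/- Let $n \geq 1$ and $0 < \theta < 1$, and suppose a probability measure $\nu$ on $S^{2n+1} \subset \mathbb{C}^{n+1}$, supported on countably many points with weights $\nu_i$ and satisfying the vanishing moment conditions $\int z_j d\nu = 0$, $\int z_j \bar z_k d\nu = 0$ ($j \neq k$), $\int |z_j|^2 d\nu = \frac{1}{n+1}$, achieves $\sum_i \nu_i^{\theta} = (n+2)^{1-\theta}$. Then $\nu$ is supported on exactly $n+2$ points $x_1, \ldots, x_{n+2}$, each with weight $\nu_i = \frac{1}{n+2}$, and for all $1 \leq i < j \leq n+2$ the pairwise distances satisfy $\|x_i - x_j\| = \sqrt{\frac{2(n+2)}{n+1}}$; i.e. the support is the vertex set of a regular $(n+1)$-simplex inscribed in the unit sphere. -/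

import Mathlib

open scoped ComplexConjugate

lemma coordb {m : ℕ} (a : EuclideanSpace ℂ (Fin m)) (k : Fin m) (h : ‖a‖ = 1) : ‖a k‖ ≤ 1 := by
  have he := EuclideanSpace.norm_eq a
  nlinarith [Finset.single_le_sum (f := fun m => ‖a m‖ ^ 2) (fun m _ => sq_nonneg _)
      (Finset.mem_univ k),
    Real.sq_sqrt (Finset.sum_nonneg fun m (_ : m ∈ Finset.univ) => sq_nonneg ‖a m‖),
    norm_nonneg (a k), Real.sqrt_nonneg (∑ m, ‖a m‖ ^ 2)]

lemma keyA (n : ℕ) (x : ℕ → EuclideanSpace ℂ (Fin (n + 1))) (hx : ∀ i, ‖x i‖ = 1)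
    (ν : ℕ → ℝ) (hν : ∀ i, 0 ≤ ν i) (hsum : Summable ν) (htot : ∑' i, ν i = 1)
    (hm1 : ∀ j : Fin (n + 1), ∑' i, (ν i : ℂ) * x i j = 0)
    (hm2 : ∀ j k : Fin (n + 1), j ≠ k →
      ∑' i, (ν i : ℂ) * (x i j * (starRingEnd ℂ) (x i k)) = 0)
    (hm3 : ∀ j : Fin (n + 1), ∑' i, ν i * ‖x i j‖ ^ 2 = 1 / (n + 1)) (i : ℕ) :
    ∑' j, ν j * Complex.normSq (1 + ((n : ℂ) + 1) * (inner ℂ (x i) (x j) : ℂ)) = (n : ℝ) + 2 := by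
  set c : ℂ := (n : ℂ) + 1 with hc
  set d : ℕ → ℂ := fun j => (inner ℂ (x i) (x j) : ℂ) with hdd
  have hd : ∀ j, d j = ∑ k, conj (x i k) * x j k := by
    intro j; simp [hdd, PiLp.inner_apply, RCLike.inner_apply]; exact Finset.sum_congr rfl fun _ _ => mul_comm _ _
  have hb1 : ∀ j k, ‖(x j k : ℂ)‖ ≤ 1 := fun j k => coordb (x j) k (hx j)
  have hdb : ∀ j, ‖d j‖ ≤ 1 := by
    intro j
    calc ‖d j‖ ≤ ‖x i‖ * ‖x j‖ := norm_inner_le_norm _ _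
    _ = 1 := by rw [hx i, hx j]; ring
  -- summability facts
  have hs0 : Summable (fun j => (ν j : ℂ)) := by
    apply Summable.of_norm_bounded hsum
    intro j; rw [Complex.norm_real, Real.norm_of_nonneg (hν j)]
  have hsk : ∀ k : Fin (n + 1), Summable (fun j => (ν j : ℂ) * x j k) := by
    intro k
    apply Summable.of_norm_bounded hsum
    intro j
    rw [norm_mul, Complex.norm_real, Real.norm_of_nonneg (hν j)]
    calc ν j * ‖x j k‖ ≤ ν j * 1 := mul_le_mul_of_nonneg_left (hb1 j k) (hν j)
      _ = ν j := mul_one _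
  have hskl : ∀ k l : Fin (n + 1), Summable (fun j => (ν j : ℂ) * (x j k * conj (x j l))) := by
    intro k l
    apply Summable.of_norm_bounded hsum
    intro j
    rw [norm_mul, Complex.norm_real, Real.norm_of_nonneg (hν j), norm_mul, RCLike.norm_conj]
    have h1 : ‖x j k‖ * ‖x j l‖ ≤ 1 := mul_le_one₀ (hb1 j k) (norm_nonneg _) (hb1 j l)
    nlinarith [hν j]
  have hs1 : Summable (fun j => (ν j : ℂ) * d j) := by
    apply Summable.of_norm_bounded hsum
    intro j
    rw [norm_mul, Complex.norm_real, Real.norm_of_nonneg (hν j)]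
    calc ν j * ‖d j‖ ≤ ν j * 1 := mul_le_mul_of_nonneg_left (hdb j) (hν j)
      _ = ν j := mul_one _
  have hs2 : Summable (fun j => (ν j : ℂ) * conj (d j)) := by
    apply Summable.of_norm_bounded hsum
    intro j
    rw [norm_mul, Complex.norm_real, Real.norm_of_nonneg (hν j), RCLike.norm_conj]
    calc ν j * ‖d j‖ ≤ ν j * 1 := mul_le_mul_of_nonneg_left (hdb j) (hν j)
      _ = ν j := mul_one _
  have hs3 : Summable (fun j => (ν j : ℂ) * (d j * conj (d j))) := by
    apply Summable.of_norm_bounded hsum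
    intro j
    rw [norm_mul, Complex.norm_real, Real.norm_of_nonneg (hν j), norm_mul, RCLike.norm_conj]
    have h1 : ‖d j‖ * ‖d j‖ ≤ 1 := mul_le_one₀ (hdb j) (norm_nonneg _) (hdb j)
    nlinarith [hν j]
  -- sub-sums
  have hE0 : ∑' j, (ν j : ℂ) = 1 := by
    rw [← Complex.ofReal_tsum, htot, Complex.ofReal_one]
  have hE1 : ∑' j, (ν j : ℂ) * d j = 0 := by
    have h1 : ∀ j, (ν j : ℂ) * d j = ∑ k, conj (x i k) * ((ν j : ℂ) * x j k) := by
      intro j; rw [hd, Finset.mul_sum]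
      exact Finset.sum_congr rfl fun k _ => by ring
    rw [tsum_congr h1, Summable.tsum_finsetSum fun k _ => (hsk k).mul_left _]
    refine Finset.sum_eq_zero fun k _ => ?_
    rw [tsum_mul_left, hm1 k, mul_zero]
  have hE2 : ∑' j, (ν j : ℂ) * conj (d j) = 0 := by
    have h1 : ∀ j, (ν j : ℂ) * conj (d j) = star ((ν j : ℂ) * d j) := by
      intro j
      rw [star_mul']
      congr 1
      · exact (Complex.conj_ofReal _).symm
    rw [tsum_congr h1, ← tsum_star, hE1, star_zero]
  have hE3 : ∑' j, (ν j : ℂ) * (d j * conj (d j)) = (((n : ℝ) + 1)⁻¹ : ℝ) := by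
    have hconjd : ∀ j, conj (d j) = ∑ l, x i l * conj (x j l) := by
      intro j
      rw [hd, map_sum]
      exact Finset.sum_congr rfl fun l _ => by rw [map_mul, Complex.conj_conj]
    have h1 : ∀ j, (ν j : ℂ) * (d j * conj (d j)) =
        ∑ k, ∑ l, (conj (x i k) * x i l) * ((ν j : ℂ) * (x j k * conj (x j l))) := by
      intro j
      rw [hconjd, hd, Finset.sum_mul_sum]
      rw [Finset.mul_sum]
      refine Finset.sum_congr rfl fun k _ => ?_
      rw [Finset.mul_sum]
      exact Finset.sum_congr rfl fun l _ => by ring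
    rw [tsum_congr h1, Summable.tsum_finsetSum fun k _ => summable_sum fun l _ => (hskl k l).mul_left _]
    have h2 : ∀ k : Fin (n + 1), ∑' j, ∑ l, (conj (x i k) * x i l) * ((ν j : ℂ) * (x j k * conj (x j l)))
        = (conj (x i k) * x i k) * (((n : ℝ) + 1)⁻¹ : ℝ) := by
      intro k
      rw [Summable.tsum_finsetSum fun l _ => (hskl k l).mul_left _]
      rw [Finset.sum_eq_single k]
      · rw [tsum_mul_left]
        congr 1
        have h3 : ∀ j, (ν j : ℂ) * (x j k * conj (x j k)) = ((ν j * ‖x j k‖ ^ 2 : ℝ) : ℂ) := by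
          intro j
          rw [Complex.mul_conj, Complex.ofReal_mul]
          congr 1
          rw [Complex.normSq_eq_norm_sq]
        rw [tsum_congr h3, ← Complex.ofReal_tsum, hm3 k]
        norm_num
      · intro l _ hlk
        rw [tsum_mul_left, hm2 k l (Ne.symm hlk), mul_zero]
      · exact fun h => absurd (Finset.mem_univ k) h
    rw [Finset.sum_congr rfl fun k _ => h2 k, ← Finset.sum_mul]
    have h4 : ∑ k, conj (x i k) * x i k = 1 := by
      have := inner_self_eq_norm_sq_to_K (𝕜 := ℂ) (x i)
      rw [PiLp.inner_apply] at this
      simp only [RCLike.inner_apply] at this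
      rw [show (∑ k, conj (x i k) * x i k) = ∑ k, x i k * conj (x i k) from Finset.sum_congr rfl fun k _ => mul_comm _ _, this, hx i]
      norm_num
    rw [h4, one_mul]
  -- the complex identity
  have expand : ∀ j, (ν j : ℂ) * ((1 + c * d j) * conj (1 + c * d j)) =
      (ν j : ℂ) + (c * ((ν j : ℂ) * d j) + (c * ((ν j : ℂ) * conj (d j)) +
        c ^ 2 * ((ν j : ℂ) * (d j * conj (d j))))) := by
    intro j
    have hcc : conj (1 + c * d j) = 1 + c * conj (d j) := by
      rw [map_add, map_mul, map_one]
      congr 2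
      rw [hc, map_add, map_one, Complex.conj_natCast]
    rw [hcc]; ring
  have hC : ∑' j, (ν j : ℂ) * ((1 + c * d j) * conj (1 + c * d j)) = (n : ℂ) + 2 := by
    rw [tsum_congr expand]
    rw [Summable.tsum_add hs0 (((hs1.mul_left c).add ((hs2.mul_left c).add (hs3.mul_left (c ^ 2)))))]
    rw [Summable.tsum_add (hs1.mul_left c) ((hs2.mul_left c).add (hs3.mul_left (c ^ 2)))]
    rw [Summable.tsum_add (hs2.mul_left c) (hs3.mul_left (c ^ 2))]
    rw [tsum_mul_left, tsum_mul_left, tsum_mul_left, hE0, hE1, hE2, hE3]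
    have hc0 : c ≠ 0 := by
      rw [hc]
      have h9 : ((n + 1 : ℕ) : ℂ) ≠ 0 := Nat.cast_ne_zero.mpr (Nat.succ_ne_zero n)
      push_cast at h9
      exact h9
    have : ((((n : ℝ) + 1)⁻¹ : ℝ) : ℂ) = c⁻¹ := by
      rw [hc]; push_cast; ring
    rw [this]
    field_simp
    ring
  -- conclude real version
  apply Complex.ofReal_injective
  rw [Complex.ofReal_tsum]
  have h5 : ∀ j, ((ν j * Complex.normSq (1 + c * d j) : ℝ) : ℂ)
      = (ν j : ℂ) * ((1 + c * d j) * conj (1 + c * d j)) := by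
    intro j
    rw [Complex.ofReal_mul, Complex.mul_conj]
  rw [tsum_congr h5, hC]
  push_cast
  ring

theorem stmt_9 (n : ℕ) (hn : 1 ≤ n) (θ : ℝ) (hθ0 : 0 < θ) (hθ1 : θ < 1)
    (x : ℕ → EuclideanSpace ℂ (Fin (n + 1))) (hx : ∀ i, ‖x i‖ = 1)
    (hinj : Function.Injective x)
    (ν : ℕ → ℝ) (hν : ∀ i, 0 ≤ ν i) (hsum : Summable ν) (htot : ∑' i, ν i = 1)
    (hm1 : ∀ j : Fin (n + 1), ∑' i, (ν i : ℂ) * x i j = 0)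
    (hm2 : ∀ j k : Fin (n + 1), j ≠ k →
      ∑' i, (ν i : ℂ) * (x i j * (starRingEnd ℂ) (x i k)) = 0)
    (hm3 : ∀ j : Fin (n + 1), ∑' i, ν i * ‖x i j‖ ^ 2 = 1 / (n + 1))
    (hsumθ : Summable (fun i => ν i ^ θ))
    (heq : ∑' i, ν i ^ θ = ((n : ℝ) + 2) ^ (1 - θ)) :
    ∃ S : Finset ℕ, S.card = n + 2 ∧ (∀ i ∉ S, ν i = 0) ∧
      (∀ i ∈ S, ν i = 1 / (n + 2)) ∧
      ∀ i ∈ S, ∀ j ∈ S, i ≠ j →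
        ‖x i - x j‖ = Real.sqrt (2 * (n + 2) / (n + 1)) := by
  have key : ∀ i, ∑' j, ν j * Complex.normSq (1 + ((n : ℂ) + 1) * (inner ℂ (x i) (x j) : ℂ))
      = (n : ℝ) + 2 := keyA n x hx ν hν hsum htot hm1 hm2 hm3
  have hdb : ∀ i j, ‖(inner ℂ (x i) (x j) : ℂ)‖ ≤ 1 := by
    intro i j
    calc ‖(inner ℂ (x i) (x j) : ℂ)‖ ≤ ‖x i‖ * ‖x j‖ := norm_inner_le_norm _ _
      _ = 1 := by rw [hx i, hx j]; ring
  have hcn : ‖((n : ℂ) + 1)‖ = (n : ℝ) + 1 := by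
    have : ((n : ℂ) + 1) = (((n : ℝ) + 1 : ℝ) : ℂ) := by push_cast; ring
    rw [this, Complex.norm_real, Real.norm_of_nonneg (by positivity)]
  have hnormb : ∀ i j, Complex.normSq (1 + ((n : ℂ) + 1) * (inner ℂ (x i) (x j) : ℂ))
      ≤ ((n : ℝ) + 2) ^ 2 := by
    intro i j
    have h1 : ‖1 + ((n : ℂ) + 1) * (inner ℂ (x i) (x j) : ℂ)‖ ≤ (n : ℝ) + 2 := by
      calc ‖1 + ((n : ℂ) + 1) * (inner ℂ (x i) (x j) : ℂ)‖
          ≤ ‖(1 : ℂ)‖ + ‖((n : ℂ) + 1) * (inner ℂ (x i) (x j) : ℂ)‖ := norm_add_le _ _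
        _ = 1 + ((n : ℝ) + 1) * ‖(inner ℂ (x i) (x j) : ℂ)‖ := by rw [norm_one, norm_mul, hcn]
        _ ≤ 1 + ((n : ℝ) + 1) * 1 := by
            have := mul_le_mul_of_nonneg_left (hdb i j) (by positivity : (0:ℝ) ≤ (n : ℝ) + 1)
            linarith
        _ = (n : ℝ) + 2 := by ring
    have h2 : Complex.normSq (1 + ((n : ℂ) + 1) * (inner ℂ (x i) (x j) : ℂ))
        = ‖1 + ((n : ℂ) + 1) * (inner ℂ (x i) (x j) : ℂ)‖ ^ 2 := by
      rw [Complex.normSq_eq_norm_sq]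
    rw [h2]
    nlinarith [norm_nonneg (1 + ((n : ℂ) + 1) * (inner ℂ (x i) (x j) : ℂ))]
  have hKsum : ∀ i, Summable (fun j => ν j *
      Complex.normSq (1 + ((n : ℂ) + 1) * (inner ℂ (x i) (x j) : ℂ))) := by
    intro i
    apply Summable.of_nonneg_of_le
      (fun j => mul_nonneg (hν j) (Complex.normSq_nonneg _))
      (fun j => mul_le_mul_of_nonneg_left (hnormb i j) (hν j))
    exact hsum.mul_right _
  have hself : ∀ i, (inner ℂ (x i) (x i) : ℂ) = 1 := by
    intro i
    rw [inner_self_eq_norm_sq_to_K, hx i]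
    norm_num
  have hdiag : ∀ i, Complex.normSq (1 + ((n : ℂ) + 1) * (inner ℂ (x i) (x i) : ℂ))
      = ((n : ℝ) + 2) ^ 2 := by
    intro i
    rw [hself i, mul_one]
    have : (1 : ℂ) + ((n : ℂ) + 1) = (((n : ℝ) + 2 : ℝ) : ℂ) := by push_cast; ring
    rw [this, Complex.normSq_ofReal]
    ring
  have hn2pos : (0 : ℝ) < (n : ℝ) + 2 := by positivity
  have hbound : ∀ i, ν i ≤ 1 / ((n : ℝ) + 2) := by
    intro i
    have h1 := Summable.le_tsum (hKsum i) i
      (fun j _ => mul_nonneg (hν j) (Complex.normSq_nonneg _))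
    rw [key i, hdiag i] at h1
    rw [le_div_iff₀ hn2pos]
    nlinarith
  -- termwise equality
  have hval : ∀ i, ν i = 0 ∨ ν i = 1 / ((n : ℝ) + 2) := by
    set g : ℕ → ℝ := fun i => ν i ^ θ - ν i * ((n : ℝ) + 2) ^ (1 - θ) with hg
    have h1θ : (0:ℝ) < 1 - θ := by linarith
    have hg0 : ∀ i, 0 ≤ g i := by
      intro i
      rcases eq_or_lt_of_le (hν i) with h | h
      · simp [hg, ← h, Real.zero_rpow (ne_of_gt hθ0)]
      · have hle : ν i * ((n : ℝ) + 2) ≤ 1 := by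
          rw [← le_div_iff₀ hn2pos]
          exact hbound i
        have h2 : (ν i * ((n : ℝ) + 2)) ^ (1 - θ) ≤ 1 :=
          Real.rpow_le_one (by positivity) hle (le_of_lt h1θ)
        rw [Real.mul_rpow (le_of_lt h) (le_of_lt hn2pos)] at h2
        have hsplit : ν i = ν i ^ θ * ν i ^ (1 - θ) := by
          rw [← Real.rpow_add h]
          norm_num
        have hp1 : (0:ℝ) ≤ ν i ^ θ := Real.rpow_nonneg (le_of_lt h) θ
        have hcalc : ν i * ((n : ℝ) + 2) ^ (1 - θ) ≤ ν i ^ θ := by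
          calc ν i * ((n : ℝ) + 2) ^ (1 - θ)
              = ν i ^ θ * (ν i ^ (1 - θ) * ((n : ℝ) + 2) ^ (1 - θ)) := by
                rw [← mul_assoc, ← hsplit]
            _ ≤ ν i ^ θ * 1 := mul_le_mul_of_nonneg_left h2 hp1
            _ = ν i ^ θ := mul_one _
        simp only [hg]
        linarith
    have hgsum : Summable g := hsumθ.sub (hsum.mul_right _)
    have hgtot : ∑' i, g i = 0 := by
      simp only [hg]
      rw [Summable.tsum_sub hsumθ (hsum.mul_right _), tsum_mul_right, htot, heq]
      ring
    have hgz : ∀ i, g i = 0 := by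
      intro i
      have h2 := Summable.le_tsum hgsum i (fun j _ => hg0 j)
      rw [hgtot] at h2
      linarith [hg0 i]
    intro i
    rcases eq_or_lt_of_le (hν i) with h | h
    · exact Or.inl h.symm
    · right
      have h3 : ν i ^ θ = ν i * ((n : ℝ) + 2) ^ (1 - θ) := by
        have := hgz i
        simp only [hg] at this
        linarith
      have hsplit : ν i = ν i ^ θ * ν i ^ (1 - θ) := by
        rw [← Real.rpow_add h]; norm_num
      have hθne : ν i ^ θ ≠ 0 := (Real.rpow_pos_of_pos h θ).ne'
      have h4 : ν i ^ (1 - θ) * ((n : ℝ) + 2) ^ (1 - θ) = 1 := by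
        have h5 : ν i ^ θ * (ν i ^ (1 - θ) * ((n : ℝ) + 2) ^ (1 - θ)) = ν i ^ θ * 1 := by
          rw [mul_one, ← mul_assoc, ← hsplit]
          exact h3.symm
        exact mul_left_cancel₀ hθne h5
      rw [← Real.mul_rpow (le_of_lt h) (le_of_lt hn2pos)] at h4
      have h6 : ν i * ((n : ℝ) + 2) = 1 := by
        have h7 : ν i * ((n : ℝ) + 2) = ((ν i * ((n : ℝ) + 2)) ^ (1 - θ)) ^ (1 - θ)⁻¹ := by
          rw [← Real.rpow_mul (by positivity), mul_inv_cancel₀ (ne_of_gt h1θ), Real.rpow_one]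
        rw [h7, h4, Real.one_rpow]
      rw [eq_div_iff (ne_of_gt hn2pos)]
      linarith
  -- finite support
  have hhalf : (0 : ℝ) < 1 / (2 * ((n : ℝ) + 2)) := by positivity
  have hev : ∀ᶠ i in Filter.cofinite, ν i < 1 / (2 * ((n : ℝ) + 2)) :=
    hsum.tendsto_cofinite_zero.eventually_lt_const hhalf
  have hfin : {i | ν i ≠ 0}.Finite := by
    apply Set.Finite.subset (Filter.eventually_cofinite.mp hev)
    intro i hi
    rcases hval i with h | h
    · exact absurd h hi
    · simp only [Set.mem_setOf_eq, not_lt, h]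
      rw [div_le_div_iff₀ (by positivity) hn2pos]
      nlinarith
  refine ⟨hfin.toFinset, ?_, ?_, ?_, ?_⟩
  case refine_2 => -- ∀ i ∉ S, ν i = 0
    intro i hi
    by_contra h
    exact hi (hfin.mem_toFinset.mpr h)
  case refine_3 =>
    intro i hi
    rcases hval i with h | h
    · exact absurd h (hfin.mem_toFinset.mp hi)
    · exact_mod_cast h
  case refine_1 =>
    have hS0 : ∀ i ∉ hfin.toFinset, ν i = 0 := by
      intro i hi
      by_contra h
      exact hi (hfin.mem_toFinset.mpr h)
    have hsum_S : ∑ i ∈ hfin.toFinset, ν i = 1 := by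
      rw [← tsum_eq_sum (L := SummationFilter.unconditional ℕ) hS0]; exact htot
    have hcongr : ∑ i ∈ hfin.toFinset, ν i
        = (hfin.toFinset.card : ℝ) * (1 / ((n : ℝ) + 2)) := by
      rw [Finset.sum_congr rfl (fun i hi => ?_), Finset.sum_const, nsmul_eq_mul]
      rcases hval i with h | h
      · exact absurd h (hfin.mem_toFinset.mp hi)
      · exact h
    have hcard : (hfin.toFinset.card : ℝ) = (n : ℝ) + 2 := by
      rw [hcongr] at hsum_S
      field_simp at hsum_S
      linarith
    have : (hfin.toFinset.card : ℝ) = ((n + 2 : ℕ) : ℝ) := by push_cast; linarith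
    exact_mod_cast this
  case refine_4 =>
    intro i hi j hj hij
    have hνi : ν i = 1 / ((n : ℝ) + 2) := by
      rcases hval i with h | h
      · exact absurd h (hfin.mem_toFinset.mp hi)
      · exact h
    have hνj : ν j = 1 / ((n : ℝ) + 2) := by
      rcases hval j with h | h
      · exact absurd h (hfin.mem_toFinset.mp hj)
      · exact h
    -- sum over the finite support
    set F : ℕ → ℝ := fun j' => ν j' *
      Complex.normSq (1 + ((n : ℂ) + 1) * (inner ℂ (x i) (x j') : ℂ)) with hF
    have hFz : ∀ b ∉ hfin.toFinset, F b = 0 := by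
      intro b hb
      have : ν b = 0 := by
        by_contra h
        exact hb (hfin.mem_toFinset.mpr h)
      simp [hF, this]
    have hts : ∑ j' ∈ hfin.toFinset, F j' = (n : ℝ) + 2 := by
      rw [← tsum_eq_sum (L := SummationFilter.unconditional ℕ) hFz]; exact key i
    have hsplit := Finset.add_sum_erase hfin.toFinset F hi
    have hFi : F i = (n : ℝ) + 2 := by
      simp only [hF]
      rw [hdiag i, hνi]
      field_simp
    have hrest : ∑ j' ∈ hfin.toFinset.erase i, F j' = 0 := by
      rw [hts, hFi] at hsplit
      linarith
    have hFnonneg : ∀ j' ∈ hfin.toFinset.erase i, 0 ≤ F j' :=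
      fun j' _ => mul_nonneg (hν j') (Complex.normSq_nonneg _)
    have hFj : F j = 0 :=
      (Finset.sum_eq_zero_iff_of_nonneg hFnonneg).mp hrest j
        (Finset.mem_erase.mpr ⟨Ne.symm hij, hj⟩)
    have hnsq : Complex.normSq (1 + ((n : ℂ) + 1) * (inner ℂ (x i) (x j) : ℂ)) = 0 := by
      have hνjne : ν j ≠ 0 := by rw [hνj]; positivity
      simp only [hF] at hFj
      exact (mul_eq_zero.mp hFj).resolve_left hνjne
    have hz : (1 : ℂ) + ((n : ℂ) + 1) * (inner ℂ (x i) (x j) : ℂ) = 0 :=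
      Complex.normSq_eq_zero.mp hnsq
    have hc0 : ((n : ℂ) + 1) ≠ 0 := by
      have h9 : ((n + 1 : ℕ) : ℂ) ≠ 0 := Nat.cast_ne_zero.mpr (Nat.succ_ne_zero n)
      push_cast at h9
      exact h9
    have hinner : (inner ℂ (x i) (x j) : ℂ) = ((-1 / ((n : ℝ) + 1) : ℝ) : ℂ) := by
      push_cast
      rw [eq_div_iff hc0]
      linear_combination hz
    have hre : Complex.re (inner ℂ (x i) (x j) : ℂ) = -1 / ((n : ℝ) + 1) := by
      rw [hinner, Complex.ofReal_re]
    have hsq : ‖x i - x j‖ ^ 2 = 2 * ((n : ℝ) + 2) / ((n : ℝ) + 1) := by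
      rw [@norm_sub_sq ℂ, hx i, hx j]
      simp only [RCLike.re_to_complex]
      rw [hre]
      field_simp
      ring
    rw [show (2 * ((n : ℝ) + 2) / ((n : ℝ) + 1)) = ‖x i - x j‖ ^ 2 from hsq.symm,
      Real.sqrt_sq (norm_nonneg _)]
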